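/- The 2×2 matrix refactorization underlying the planar collision map: let X, Y be 2×2 complex matrices such that W := Y + X − tr(X)·I is invertible, and define U := (YX − det(X)·I)·W⁻¹ and V := Y + X − U. Then U + V = X + Y and U·V = Y·X (equivalently, (U − ζI)(V − ζI) = (Y − ζI)(X − ζI) for all ζ ∈ ℂ), and moreover det(U) = det(X), tr(U) = tr(X), det(V) = det(Y), and tr(V) = tr(Y). -/
import Mathlib


open Matrix

private lemma aux_expand (A B : Matrix (Fin 2) (Fin 2) ℂ) (ζ : ℂ) :
    (A - ζ • (1 : Matrix (Fin 2) (Fin 2) ℂ)) * (B - ζ • (1 : Matrix (Fin 2) (Fin 2) ℂ)) =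
      A * B - ζ • (A + B) + (ζ * ζ) • (1 : Matrix (Fin 2) (Fin 2) ℂ) := by
  simp only [sub_mul, mul_sub, Matrix.smul_mul, Matrix.mul_smul, one_mul, mul_one, smul_smul,
    smul_add]
  abel

/-- The 2×2 matrix refactorization underlying the planar collision map:
if `W = Y + X − tr(X)·I` is invertible, `U = (YX − det(X)·I)·W⁻¹` and
`V = Y + X − U`, then `U + V = X + Y`, `U·V = Y·X` (equivalently
`(U − ζI)(V − ζI) = (Y − ζI)(X − ζI)` for all `ζ`), and `U`, `V` have the same
determinant and trace as `X`, `Y` respectively. -/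
theorem matrix_refactorization
    (X Y : Matrix (Fin 2) (Fin 2) ℂ)
    (W : Matrix (Fin 2) (Fin 2) ℂ)
    (hW : W = Y + X - (Matrix.trace X) • (1 : Matrix (Fin 2) (Fin 2) ℂ))
    (hWinv : IsUnit W)
    (U V : Matrix (Fin 2) (Fin 2) ℂ)
    (hU : U = (Y * X - (Matrix.det X) • (1 : Matrix (Fin 2) (Fin 2) ℂ)) * W⁻¹)
    (hV : V = Y + X - U) :
    U + V = X + Y ∧
    U * V = Y * X ∧
    (∀ ζ : ℂ, (U - ζ • (1 : Matrix (Fin 2) (Fin 2) ℂ)) *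
        (V - ζ • (1 : Matrix (Fin 2) (Fin 2) ℂ)) =
      (Y - ζ • (1 : Matrix (Fin 2) (Fin 2) ℂ)) *
        (X - ζ • (1 : Matrix (Fin 2) (Fin 2) ℂ))) ∧
    U.det = X.det ∧
    U.trace = X.trace ∧
    V.det = Y.det ∧
    V.trace = Y.trace := by
  have hdet : IsUnit W.det := (Matrix.isUnit_iff_isUnit_det W).mp hWinv
  have h1 : W * W⁻¹ = 1 := Matrix.mul_nonsing_inv W hdet
  have h2 : W⁻¹ * W = 1 := Matrix.nonsing_inv_mul W hdet
  -- W*X = YX - det X • 1 (Cayley–Hamilton, entrywise)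
  have hWX : W * X = Y * X - (Matrix.det X) • (1 : Matrix (Fin 2) (Fin 2) ℂ) := by
    subst hW
    ext i j
    fin_cases i <;> fin_cases j <;>
      simp [Matrix.mul_apply, Fin.sum_univ_two, Matrix.det_fin_two, Matrix.trace_fin_two,
        Matrix.one_apply] <;> ring
  have hUW : U * W = W * X := by
    rw [hU, mul_assoc, h2, mul_one, hWX]
  have hUeq : U = W * X * W⁻¹ := by
    have : U * (W * W⁻¹) = W * X * W⁻¹ := by rw [← mul_assoc, hUW]
    rwa [h1, mul_one] at this
  -- (Y+X)*W = W*X + W*Y (entrywise)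
  have hE : (Y + X) * W = W * X + W * Y := by
    subst hW
    ext i j
    fin_cases i <;> fin_cases j <;>
      simp [Matrix.mul_apply, Fin.sum_univ_two, Matrix.trace_fin_two, Matrix.one_apply] <;> ring
  have hVW : V * W = W * Y := by
    rw [hV, sub_mul, hUW, hE]
    abel
  have hVeq : V = W * Y * W⁻¹ := by
    have : V * (W * W⁻¹) = W * Y * W⁻¹ := by rw [← mul_assoc, hVW]
    rwa [h1, mul_one] at this
  -- W*(X*Y) = (Y*X)*W (entrywise consequence of Cayley–Hamilton)
  have hkey : W * (X * Y) = (Y * X) * W := by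
    subst hW
    ext i j
    fin_cases i <;> fin_cases j <;>
      simp [Matrix.mul_apply, Fin.sum_univ_two, Matrix.trace_fin_two, Matrix.one_apply] <;> ring
  have hsum : U + V = X + Y := by rw [hV]; abel
  have hprod : U * V = Y * X := by
    rw [hUeq, hVeq]
    have step : W * X * W⁻¹ * (W * Y * W⁻¹) = W * (X * Y) * W⁻¹ := by
      simp only [mul_assoc]
      rw [← mul_assoc W⁻¹ W, h2, one_mul]
    rw [step, hkey, mul_assoc, h1, mul_one]
  have hdetWW : W.det * W⁻¹.det = 1 := by
    rw [← Matrix.det_mul, h1, Matrix.det_one]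
  have hdetU : U.det = X.det := by
    rw [hUeq, Matrix.det_mul, Matrix.det_mul]
    calc W.det * X.det * W⁻¹.det = X.det * (W.det * W⁻¹.det) := by ring
      _ = X.det := by rw [hdetWW, mul_one]
  have htrU : U.trace = X.trace := by
    rw [hUeq, Matrix.trace_mul_cycle, h2, one_mul]
  have hdetV : V.det = Y.det := by
    rw [hVeq, Matrix.det_mul, Matrix.det_mul]
    calc W.det * Y.det * W⁻¹.det = Y.det * (W.det * W⁻¹.det) := by ring
      _ = Y.det := by rw [hdetWW, mul_one]
  have htrV : V.trace = Y.trace := by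
    rw [hVeq, Matrix.trace_mul_cycle, h2, one_mul]
  refine ⟨hsum, hprod, ?_, hdetU, htrU, hdetV, htrV⟩
  intro ζ
  rw [aux_expand, aux_expand, hsum, hprod, add_comm Y X]
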